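/- Let F be a spanning connected multigraph of a graph G such that F crosses every 2-edge cut of G an even number of times, and let T be the set of vertices of odd degree in F. Then the everywhere-1/3 vector is a feasible solution of the T-join dominant LP: for every S ⊆ V with |S ∩ T| odd, (1/3)·|δ_G(S)| ≥ 1. -/

import Mathlib

open Finset
open scoped Classical

/-- The set of edges of `G` with exactly one endpoint in `S`. -/
noncomputable def cutEdges {V : Type*} [Fintype V] [DecidableEq V] (G : SimpleGraph V)
    [DecidableRel G.Adj] (S : Finset V) : Finset (Sym2 V) :=
  G.edgeFinset.filter (fun e => ∃ u ∈ S, ∃ v, v ∉ S ∧ e = s(u, v))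

lemma cut_cnt {V : Type*} [Fintype V] [DecidableEq V] (G : SimpleGraph V)
    [DecidableRel G.Adj] (S : Finset V) (e : Sym2 V) (he : e ∈ G.edgeFinset) :
    ((S.filter (fun v => v ∈ e)).card : ZMod 2) = if e ∈ cutEdges G S then 1 else 0 := by
  induction e using Sym2.ind with
  | _ a b =>
    rw [SimpleGraph.mem_edgeFinset] at he
    have hab : a ≠ b := (G.mem_edgeSet.mp he).ne
    have hmem : s(a, b) ∈ cutEdges G S ↔ ((a ∈ S ∧ b ∉ S) ∨ (b ∈ S ∧ a ∉ S)) := by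
      constructor
      · rintro h
        rw [cutEdges, Finset.mem_filter] at h
        obtain ⟨-, u, hu, v, hv, heq⟩ := h
        rw [Sym2.eq_iff] at heq
        rcases heq with ⟨rfl, rfl⟩ | ⟨rfl, rfl⟩
        · exact Or.inl ⟨hu, hv⟩
        · exact Or.inr ⟨hu, hv⟩
      · rintro (⟨h1, h2⟩ | ⟨h1, h2⟩) <;>
          rw [cutEdges, Finset.mem_filter] <;>
          refine ⟨SimpleGraph.mem_edgeFinset.mpr he, ?_⟩
        · exact ⟨a, h1, b, h2, rfl⟩
        · exact ⟨b, h1, a, h2, Sym2.eq_swap⟩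
    have hfil : S.filter (fun v => v ∈ s(a, b)) = S ∩ {a, b} := by
      ext v; simp [Sym2.mem_iff, Finset.mem_inter, and_comm]
    rw [hfil]
    by_cases ha : a ∈ S <;> by_cases hb : b ∈ S
    · have : S ∩ {a, b} = {a, b} := by
        ext v; simp only [Finset.mem_inter, Finset.mem_insert, Finset.mem_singleton]
        constructor
        · exact fun h => h.2
        · rintro (rfl | rfl) <;> simp [ha, hb]
      rw [this, Finset.card_insert_of_notMem (by simp [hab]), Finset.card_singleton]
      simp [hmem, ha, hb]
      decide
    · have : S ∩ {a, b} = {a} := by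
        ext v; simp only [Finset.mem_inter, Finset.mem_insert, Finset.mem_singleton]
        constructor
        · rintro ⟨hv, rfl | rfl⟩ <;> [rfl; exact absurd hv hb]
        · rintro rfl; exact ⟨ha, Or.inl rfl⟩
      rw [this]
      simp [hmem, ha, hb]
    · have : S ∩ {a, b} = {b} := by
        ext v; simp only [Finset.mem_inter, Finset.mem_insert, Finset.mem_singleton]
        constructor
        · rintro ⟨hv, rfl | rfl⟩ <;> [exact absurd hv ha; rfl]
        · rintro rfl; exact ⟨hb, Or.inr rfl⟩
      rw [this]
      simp [hmem, ha, hb]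
    · have : S ∩ {a, b} = ∅ := by
        ext v; simp only [Finset.mem_inter, Finset.mem_insert, Finset.mem_singleton,
          Finset.notMem_empty, iff_false]
        rintro ⟨hv, rfl | rfl⟩ <;> [exact ha hv; exact hb hv]
      rw [this]
      simp [hmem, ha, hb]

lemma parity_key {V : Type*} [Fintype V] [DecidableEq V] (G : SimpleGraph V)
    [DecidableRel G.Adj] (m : Sym2 V → ℕ) (S : Finset V) :
    ((S.filter (fun v => Odd (∑ e ∈ G.edgeFinset.filter (fun e => v ∈ e), m e))).card : ZMod 2)
      = (∑ e ∈ cutEdges G S, m e : ℕ) := by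
  have h1 : ((S.filter (fun v => Odd (∑ e ∈ G.edgeFinset.filter (fun e => v ∈ e), m e))).card
      : ZMod 2) = ∑ v ∈ S, ((∑ e ∈ G.edgeFinset.filter (fun e => v ∈ e), m e : ℕ) : ZMod 2) := by
    rw [Finset.card_filter, Nat.cast_sum]
    refine Finset.sum_congr rfl fun v _ => ?_
    by_cases h : Odd (∑ e ∈ G.edgeFinset.filter (fun e => v ∈ e), m e)
    · rw [if_pos h, ZMod.natCast_eq_one_iff_odd.mpr h]; simp
    · rw [if_neg h, ZMod.natCast_eq_zero_iff_even.mpr (Nat.not_odd_iff_even.mp h)]; simp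
  rw [h1]
  have h2 : ∀ v ∈ S, ((∑ e ∈ G.edgeFinset.filter (fun e => v ∈ e), m e : ℕ) : ZMod 2)
      = ∑ e ∈ G.edgeFinset, (if v ∈ e then (m e : ZMod 2) else 0) := by
    intro v _
    rw [Nat.cast_sum, Finset.sum_filter]
  rw [Finset.sum_congr rfl h2, Finset.sum_comm]
  have h3 : ∀ e ∈ G.edgeFinset, (∑ v ∈ S, if v ∈ e then (m e : ZMod 2) else 0)
      = (if e ∈ cutEdges G S then 1 else 0) * (m e : ZMod 2) := by
    intro e he
    rw [← Finset.sum_filter, Finset.sum_const, nsmul_eq_mul, ← cut_cnt G S e he]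
  rw [Finset.sum_congr rfl h3]
  rw [Nat.cast_sum]
  have h4 : G.edgeFinset.filter (fun e => e ∈ cutEdges G S) = cutEdges G S := by
    rw [Finset.filter_mem_eq_inter]
    exact Finset.inter_eq_right.mpr (Finset.filter_subset _ _)
  simp only [ite_mul, one_mul, zero_mul]
  rw [← Finset.sum_filter, h4]

theorem stmt11 {V : Type*} [Fintype V] [DecidableEq V] (G : SimpleGraph V) [DecidableRel G.Adj]
    (hconn : G.Connected)
    (h2ec : ∀ T : Finset V, T.Nonempty → T ≠ Finset.univ → 2 ≤ (cutEdges G T).card)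
    (m : Sym2 V → ℕ) (hm2 : ∀ e, m e ≤ 2) (hmE : ∀ e, 0 < m e → e ∈ G.edgeSet)
    (hFconn : (SimpleGraph.fromEdgeSet {e : Sym2 V | 0 < m e}).Connected)
    (heven : ∀ S : Finset V, (cutEdges G S).card = 2 → Even (∑ e ∈ cutEdges G S, m e))
    (T : Finset V)
    (hT : T = Finset.univ.filter
      (fun v => Odd (∑ e ∈ G.edgeFinset.filter (fun e => v ∈ e), m e))) :
    ∀ S : Finset V, Odd ((S ∩ T).card) →
      1 ≤ (1/3 : ℝ) * (cutEdges G S).card := by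
  intro S hodd
  have hST : S ∩ T = S.filter (fun v => Odd (∑ e ∈ G.edgeFinset.filter (fun e => v ∈ e), m e)) := by
    rw [hT]; ext v; simp [Finset.mem_inter, Finset.mem_filter, and_assoc]
  rw [hST] at hodd
  have hcut : Odd (∑ e ∈ cutEdges G S, m e) := by
    rw [← ZMod.natCast_eq_one_iff_odd, ← parity_key G m S, ZMod.natCast_eq_one_iff_odd]
    exact hodd
  -- cut sum odd ⇒ cut nonempty
  obtain ⟨e, he, hme⟩ : ∃ e ∈ cutEdges G S, 0 < m e := by
    by_contra h
    push_neg at h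
    have : ∑ e ∈ cutEdges G S, m e = 0 :=
      Finset.sum_eq_zero fun e he => Nat.le_zero.mp (h e he)
    rw [this] at hcut
    simp at hcut
  rw [cutEdges, Finset.mem_filter] at he
  obtain ⟨heE, u, hu, v, hv, rfl⟩ := he
  have hSne : S.Nonempty := ⟨u, hu⟩
  have hSnu : S ≠ Finset.univ := fun h => hv (h ▸ Finset.mem_univ v)
  have h2 := h2ec S hSne hSnu
  have h3 : 3 ≤ (cutEdges G S).card := by
    by_contra hlt
    push_neg at hlt
    have hc2 : (cutEdges G S).card = 2 := by omega
    exact (Nat.not_even_iff_odd.mpr hcut) (heven S hc2)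
  have : (3 : ℝ) ≤ (cutEdges G S).card := by exact_mod_cast h3
  linarith
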